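/- Let x, y : [0,T) → ℝ be continuously differentiable functions satisfying the ODE system x' = -x + x² + y² and y' = y(x + y). If |x(0)| ≤ ε and |y(0)| ≤ δ with δ ≤ ε and ε, δ ≤ 1/16, then as long as the solution satisfies the a priori bounds |x(t)| ≤ δ + 2ε e^{-t} and |y(t)| ≤ 2δ on [0,t] with t ≤ 1/(12δ), one has the improved bounds |x(t)| ≤ (3/2)ε e^{-t} + (3/8)δ and |y(t)| ≤ (7/4)δ. Consequently the solution exists at least on [0, 1/(12δ)]. -/

import Mathlib

open Real Set

/-- Bootstrap estimate and persistence of the ansatz bounds for the toy ODE system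
`x' = -x + x² + y²`, `y' = y(x+y)`, giving existence (of the bounds) up to time `1/(12δ)`. -/
lemma mono_bound (f φ : ℝ → ℝ) (t : ℝ) (ht : 0 ≤ t)
    (hf : ContinuousOn f (Icc 0 t)) (hφc : ContinuousOn φ (Icc 0 t))
    (hder : ∀ s ∈ Ioo (0:ℝ) t, ∃ f' φ', HasDerivAt f f' s ∧ HasDerivAt φ φ' s ∧ |f'| ≤ φ') :
    |f t - f 0| ≤ φ t - φ 0 := by
  have hint : interior (Icc (0:ℝ) t) = Ioo 0 t := interior_Icc
  have hF : MonotoneOn (fun s => φ s - f s) (Icc 0 t) := by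
    apply monotoneOn_of_deriv_nonneg (convex_Icc 0 t) (hφc.sub hf)
    · intro s hs
      rw [hint] at hs
      obtain ⟨f', φ', hf', hφ', _⟩ := hder s hs
      exact (hφ'.sub hf').differentiableAt.differentiableWithinAt
    · intro s hs
      rw [hint] at hs
      obtain ⟨f', φ', hf', hφ', hle⟩ := hder s hs
      rw [(hφ'.sub hf').deriv]
      have := abs_le.mp hle
      linarith [this.2]
  have hG : MonotoneOn (fun s => φ s + f s) (Icc 0 t) := by
    apply monotoneOn_of_deriv_nonneg (convex_Icc 0 t) (hφc.add hf)
    · intro s hs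
      rw [hint] at hs
      obtain ⟨f', φ', hf', hφ', _⟩ := hder s hs
      exact (hφ'.add hf').differentiableAt.differentiableWithinAt
    · intro s hs
      rw [hint] at hs
      obtain ⟨f', φ', hf', hφ', hle⟩ := hder s hs
      rw [(hφ'.add hf').deriv]
      have := abs_le.mp hle
      linarith [this.1]
  have h1 := hF (left_mem_Icc.mpr ht) (right_mem_Icc.mpr ht) ht
  have h2 := hG (left_mem_Icc.mpr ht) (right_mem_Icc.mpr ht) ht
  simp only at h1 h2
  rw [abs_le]
  constructor <;> linarith

lemma exp_neg_deriv (s : ℝ) : HasDerivAt (fun u : ℝ => Real.exp (-u)) (-Real.exp (-s)) s := by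
  have h := (Real.hasDerivAt_exp (-s)).comp s (hasDerivAt_neg s)
  simp only [mul_neg, mul_one] at h
  exact h

set_option maxHeartbeats 1000000 in
lemma key (T ε δ : ℝ) (x y : ℝ → ℝ)
    (hδ : 0 < δ) (hδε : δ ≤ ε) (hε : ε ≤ 1 / 16)
    (hdx : ∀ t ∈ Set.Ico (0 : ℝ) T, HasDerivAt x (-x t + x t ^ 2 + y t ^ 2) t)
    (hdy : ∀ t ∈ Set.Ico (0 : ℝ) T, HasDerivAt y (y t * (x t + y t)) t)
    (hx0 : |x 0| ≤ ε) (hy0 : |y 0| ≤ δ)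
    (t : ℝ) (ht : t ∈ Set.Ico (0:ℝ) T) (ht2 : t ≤ 1 / (12 * δ))
    (hb : ∀ s ∈ Set.Icc (0 : ℝ) t, |x s| ≤ δ + 2 * ε * Real.exp (-s) ∧ |y s| ≤ 2 * δ) :
    |x t| ≤ (3 / 2) * ε * Real.exp (-t) + (3 / 8) * δ ∧ |y t| ≤ (7 / 4) * δ := by
  obtain ⟨ht0, htT⟩ := ht
  have hεpos : 0 < ε := lt_of_lt_of_le hδ hδε
  have hsub : Icc (0:ℝ) t ⊆ Ico 0 T := fun s hs => ⟨hs.1, lt_of_le_of_lt hs.2 htT⟩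
  have hxc : ContinuousOn x (Icc 0 t) := fun s hs =>
    ((hdx s (hsub hs)).continuousAt).continuousWithinAt
  have hyc : ContinuousOn y (Icc 0 t) := fun s hs =>
    ((hdy s (hsub hs)).continuousAt).continuousWithinAt
  -- x estimate
  have hxest : |x t| ≤ (3 / 2) * ε * Real.exp (-t) + (3 / 8) * δ := by
    have hmb : |Real.exp t * x t - Real.exp 0 * x 0| ≤
        (6 * δ^2 * (Real.exp t - 1) + 8 * ε^2 * (1 - Real.exp (-t))) -
        (6 * δ^2 * (Real.exp 0 - 1) + 8 * ε^2 * (1 - Real.exp (-(0:ℝ)))) := by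
      apply mono_bound (fun s => Real.exp s * x s)
        (fun s => 6 * δ^2 * (Real.exp s - 1) + 8 * ε^2 * (1 - Real.exp (-s))) t ht0
      · exact (Real.continuous_exp.continuousOn).mul hxc
      · apply Continuous.continuousOn; continuity
      · intro s hs
        have hsmem : s ∈ Ico (0:ℝ) T := hsub ⟨hs.1.le, hs.2.le⟩
        refine ⟨Real.exp s * (x s ^ 2 + y s ^ 2),
          6 * δ^2 * Real.exp s + 8 * ε^2 * Real.exp (-s), ?_, ?_, ?_⟩
        · have h := (Real.hasDerivAt_exp s).mul (hdx s hsmem)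
          exact h.congr_deriv (by ring)
        · have h1 := ((Real.hasDerivAt_exp s).sub_const 1).const_mul (6 * δ^2)
          have h2 := ((hasDerivAt_const s (1:ℝ)).sub (exp_neg_deriv s)).const_mul (8 * ε^2)
          exact (h1.add h2).congr_deriv (by ring)
        · have hbs := hb s ⟨hs.1.le, hs.2.le⟩
          have hx1 := abs_le.mp hbs.1
          have hy1 := abs_le.mp hbs.2
          have hE : (0:ℝ) < Real.exp s := Real.exp_pos s
          have ha : (0:ℝ) < Real.exp (-s) := Real.exp_pos (-s)
          have he1 : Real.exp s * Real.exp (-s) = 1 := by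
            rw [← Real.exp_add]; simp
          rw [abs_of_nonneg (by positivity)]
          have h5 : x s ^ 2 + y s ^ 2 ≤ 6 * δ^2 + 8 * ε^2 * Real.exp (-s)^2 := by
            nlinarith [sq_nonneg (δ - 2 * ε * Real.exp (-s))]
          calc Real.exp s * (x s ^ 2 + y s ^ 2)
              ≤ Real.exp s * (6 * δ^2 + 8 * ε^2 * Real.exp (-s)^2) :=
                mul_le_mul_of_nonneg_left h5 hE.le
            _ = 6 * δ^2 * Real.exp s + 8 * ε^2 * Real.exp (-s) := by
                linear_combination (8 * ε^2 * Real.exp (-s)) * he1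
    have hE : (0:ℝ) < Real.exp t := Real.exp_pos t
    have ha : (0:ℝ) < Real.exp (-t) := Real.exp_pos (-t)
    have ha1 : Real.exp (-t) ≤ 1 := Real.exp_le_one_iff.mpr (by linarith)
    have hE1 : (1:ℝ) ≤ Real.exp t := Real.one_le_exp ht0
    have he1 : Real.exp t * Real.exp (-t) = 1 := by rw [← Real.exp_add]; simp
    simp only [Real.exp_zero, one_mul, neg_zero] at hmb
    have habs := abs_le.mp hmb
    have hxabs := abs_le.mp hx0
    -- multiply through by exp(-t)
    have hup : x t ≤ Real.exp (-t) * (ε + (6 * δ^2 * (Real.exp t - 1) + 8 * ε^2 * (1 - Real.exp (-t)))) := by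
      have h6 : Real.exp t * x t ≤ ε + (6 * δ^2 * (Real.exp t - 1) + 8 * ε^2 * (1 - Real.exp (-t))) := by
        linarith [habs.2]
      have := mul_le_mul_of_nonneg_left h6 ha.le
      calc x t = Real.exp (-t) * (Real.exp t * x t) := by
            rw [← mul_assoc, mul_comm (Real.exp (-t)) (Real.exp t), he1, one_mul]
        _ ≤ _ := this
    have hlo : -(Real.exp (-t) * (ε + (6 * δ^2 * (Real.exp t - 1) + 8 * ε^2 * (1 - Real.exp (-t))))) ≤ x t := by
      have h6 : -(ε + (6 * δ^2 * (Real.exp t - 1) + 8 * ε^2 * (1 - Real.exp (-t)))) ≤ Real.exp t * x t := by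
        linarith [habs.1]
      have := mul_le_mul_of_nonneg_left h6 ha.le
      calc -(Real.exp (-t) * (ε + (6 * δ^2 * (Real.exp t - 1) + 8 * ε^2 * (1 - Real.exp (-t)))))
          = Real.exp (-t) * (-(ε + (6 * δ^2 * (Real.exp t - 1) + 8 * ε^2 * (1 - Real.exp (-t))))) := by ring
        _ ≤ Real.exp (-t) * (Real.exp t * x t) := this
        _ = x t := by rw [← mul_assoc, mul_comm (Real.exp (-t)) (Real.exp t), he1, one_mul]
    -- now bound the RHS
    have hrhs : Real.exp (-t) * (ε + (6 * δ^2 * (Real.exp t - 1) + 8 * ε^2 * (1 - Real.exp (-t))))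
        ≤ (3 / 2) * ε * Real.exp (-t) + (3 / 8) * δ := by
      have hexp : Real.exp (-t) * (6 * δ^2 * Real.exp t) = 6 * δ^2 := by
        rw [show Real.exp (-t) * (6 * δ^2 * Real.exp t) = 6*δ^2*(Real.exp t * Real.exp (-t)) by ring, he1, mul_one]
      nlinarith [mul_pos ha ha, mul_pos hεpos ha, sq_nonneg (Real.exp (-t)),
        mul_nonneg (mul_nonneg hεpos.le hεpos.le) ha.le,
        mul_nonneg (mul_nonneg hδ.le hδ.le) ha.le]
    rw [abs_le]
    constructor <;> linarith
  refine ⟨hxest, ?_⟩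
  -- y estimate
  have hmb : |y t - y 0| ≤ (6 * δ^2 * t + 4 * δ * ε * (1 - Real.exp (-t))) -
      (6 * δ^2 * 0 + 4 * δ * ε * (1 - Real.exp (-(0:ℝ)))) := by
    apply mono_bound y (fun s => 6 * δ^2 * s + 4 * δ * ε * (1 - Real.exp (-s))) t ht0 hyc
    · apply Continuous.continuousOn; continuity
    · intro s hs
      have hsmem : s ∈ Ico (0:ℝ) T := hsub ⟨hs.1.le, hs.2.le⟩
      refine ⟨y s * (x s + y s), 6 * δ^2 + 4 * δ * ε * Real.exp (-s), hdy s hsmem, ?_, ?_⟩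
      · have h1 := (hasDerivAt_id s).const_mul (6 * δ^2)
        have h2 := ((hasDerivAt_const s (1:ℝ)).sub (exp_neg_deriv s)).const_mul (4 * δ * ε)
        exact (h1.add h2).congr_deriv (by ring)
      · have hbs := hb s ⟨hs.1.le, hs.2.le⟩
        have hx1 := abs_le.mp hbs.1
        have hy1 := abs_le.mp hbs.2
        have ha : (0:ℝ) < Real.exp (-s) := Real.exp_pos (-s)
        rw [abs_le]
        constructor <;> nlinarith
  simp only [mul_zero, neg_zero, Real.exp_zero, sub_self, mul_zero, add_zero, sub_zero] at hmb
  have habs := abs_le.mp hmb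
  have hyabs := abs_le.mp hy0
  have ha : (0:ℝ) < Real.exp (-t) := Real.exp_pos (-t)
  have ha1 : Real.exp (-t) ≤ 1 := Real.exp_le_one_iff.mpr (by linarith)
  have htδ : 6 * δ^2 * t ≤ δ / 2 := by
    have h12 : 0 < 12 * δ := by linarith
    have := (le_div_iff₀ h12).mp ht2
    nlinarith
  rw [abs_le]
  have hδε4 : (0:ℝ) ≤ 4 * δ * ε := by positivity
  have h1 : 4 * δ * ε * (1 - Real.exp (-t)) ≤ δ / 4 := by nlinarith [mul_pos hδ hεpos]
  have h2 : 0 ≤ 4 * δ * ε * (1 - Real.exp (-t)) := mul_nonneg hδε4 (by linarith)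
  constructor <;> linarith [habs.1, habs.2, hyabs.1, hyabs.2]

theorem stmt0 (T ε δ : ℝ) (x y : ℝ → ℝ)
    (hδ : 0 < δ) (hδε : δ ≤ ε) (hε : ε ≤ 1 / 16)
    (hx0 : |x 0| ≤ ε) (hy0 : |y 0| ≤ δ)
    (hdx : ∀ t ∈ Set.Ico (0 : ℝ) T, HasDerivAt x (-x t + x t ^ 2 + y t ^ 2) t)
    (hdy : ∀ t ∈ Set.Ico (0 : ℝ) T, HasDerivAt y (y t * (x t + y t)) t) :
    (∀ t ∈ Set.Ico (0 : ℝ) T, t ≤ 1 / (12 * δ) →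
      (∀ s ∈ Set.Icc (0 : ℝ) t, |x s| ≤ δ + 2 * ε * Real.exp (-s) ∧ |y s| ≤ 2 * δ) →
      |x t| ≤ (3 / 2) * ε * Real.exp (-t) + (3 / 8) * δ ∧ |y t| ≤ (7 / 4) * δ) ∧
    (∀ t ∈ Set.Ico (0 : ℝ) T, t ≤ 1 / (12 * δ) →
      |x t| ≤ δ + 2 * ε * Real.exp (-t) ∧ |y t| ≤ 2 * δ) := by
  have hεpos : 0 < ε := lt_of_lt_of_le hδ hδε
  refine ⟨fun t ht ht2 hb => key T ε δ x y hδ hδε hε hdx hdy hx0 hy0 t ht ht2 hb, ?_⟩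
  intro t0 ht0 ht02
  by_contra hcon
  set B : Set ℝ := {b | b ∈ Icc 0 t0 ∧
    ¬ (|x b| ≤ δ + 2 * ε * Real.exp (-b) ∧ |y b| ≤ 2 * δ)} with hB_def
  have hB : B.Nonempty := ⟨t0, ⟨ht0.1, le_refl t0⟩, hcon⟩
  have hBbdd : BddBelow B := ⟨0, fun b hb => hb.1.1⟩
  set τ := sInf B with hτ_def
  have hτ0 : 0 ≤ τ := le_csInf hB (fun b hb => hb.1.1)
  have hτle : τ ≤ t0 := csInf_le hBbdd ⟨⟨ht0.1, le_refl t0⟩, hcon⟩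
  have hτT : τ < T := lt_of_le_of_lt hτle ht0.2
  have hτ2 : τ ≤ 1 / (12 * δ) := le_trans hτle ht02
  -- bounds before τ
  have hbefore : ∀ s ∈ Ico (0:ℝ) τ,
      |x s| ≤ δ + 2 * ε * Real.exp (-s) ∧ |y s| ≤ 2 * δ := by
    intro s hs
    by_contra h
    exact absurd (csInf_le hBbdd ⟨⟨hs.1, hs.2.le.trans hτle⟩, h⟩) (not_le.mpr hs.2)
  -- bounds at τ
  have hτbound : |x τ| ≤ δ + 2 * ε * Real.exp (-τ) ∧ |y τ| ≤ 2 * δ := by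
    rcases eq_or_lt_of_le hτ0 with h0 | h0
    · rw [← h0]
      simp only [neg_zero, Real.exp_zero, mul_one]
      exact ⟨by linarith, by linarith⟩
    · -- limit from the left
      have hioc : τ ∈ closure (Ico (0:ℝ) τ) := by
        rw [closure_Ico (ne_of_lt h0)]
        exact ⟨hτ0, le_refl τ⟩
      have hne : (nhdsWithin τ (Ico (0:ℝ) τ)).NeBot :=
        mem_closure_iff_nhdsWithin_neBot.mp hioc
      have hxcont : ContinuousAt x τ := (hdx τ ⟨hτ0, hτT⟩).continuousAt
      have hycont : ContinuousAt y τ := (hdy τ ⟨hτ0, hτT⟩).continuousAt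
      have hexpc : ContinuousAt (fun s : ℝ => Real.exp (-s)) τ :=
        (Real.continuous_exp.comp continuous_neg).continuousAt
      have hgx : ContinuousAt (fun s => δ + 2 * ε * Real.exp (-s) - |x s|) τ :=
        (continuousAt_const.add (continuousAt_const.mul hexpc)).sub hxcont.abs
      have hgy : ContinuousAt (fun s => 2 * δ - |y s|) τ :=
        continuousAt_const.sub hycont.abs
      constructor
      · have h := ge_of_tendsto (hgx.continuousWithinAt.tendsto) (by
          filter_upwards [self_mem_nhdsWithin] with s hs
          have := (hbefore s hs).1
          linarith : ∀ᶠ s in nhdsWithin τ (Ico 0 τ), 0 ≤ δ + 2 * ε * Real.exp (-s) - |x s|)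
        linarith
      · have h := ge_of_tendsto (hgy.continuousWithinAt.tendsto) (by
          filter_upwards [self_mem_nhdsWithin] with s hs
          have := (hbefore s hs).2
          linarith : ∀ᶠ s in nhdsWithin τ (Ico 0 τ), 0 ≤ 2 * δ - |y s|)
        linarith
  -- improved bounds at τ via key
  have hτicc : ∀ s ∈ Icc (0:ℝ) τ, |x s| ≤ δ + 2 * ε * Real.exp (-s) ∧ |y s| ≤ 2 * δ := by
    intro s hs
    rcases lt_or_eq_of_le hs.2 with h | h
    · exact hbefore s ⟨hs.1, h⟩
    · rw [h]; exact hτbound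
  have himp := key T ε δ x y hδ hδε hε hdx hdy hx0 hy0 τ ⟨hτ0, hτT⟩ hτ2 hτicc
  -- strict room at τ
  have haτ : (0:ℝ) < Real.exp (-τ) := Real.exp_pos (-τ)
  have hxstrict : |x τ| < δ + 2 * ε * Real.exp (-τ) := by nlinarith [himp.1]
  have hystrict : |y τ| < 2 * δ := by nlinarith [himp.2]
  -- continuity gives a neighborhood where the bounds hold
  have hxcont : ContinuousAt x τ := (hdx τ ⟨hτ0, hτT⟩).continuousAt
  have hycont : ContinuousAt y τ := (hdy τ ⟨hτ0, hτT⟩).continuousAt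
  have hexpc : ContinuousAt (fun s : ℝ => Real.exp (-s)) τ :=
    (Real.continuous_exp.comp continuous_neg).continuousAt
  have hgx : ContinuousAt (fun s => δ + 2 * ε * Real.exp (-s) - |x s|) τ :=
    (continuousAt_const.add (continuousAt_const.mul hexpc)).sub hxcont.abs
  have hgy : ContinuousAt (fun s => 2 * δ - |y s|) τ :=
    continuousAt_const.sub hycont.abs
  have h1 : (fun s => δ + 2 * ε * Real.exp (-s) - |x s|) ⁻¹' (Set.Ioi 0) ∈ nhds τ :=
    hgx (Ioi_mem_nhds (by linarith : (0:ℝ) < δ + 2 * ε * Real.exp (-τ) - |x τ|))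
  have h2 : (fun s => 2 * δ - |y s|) ⁻¹' (Set.Ioi 0) ∈ nhds τ :=
    hgy (Ioi_mem_nhds (by linarith : (0:ℝ) < 2 * δ - |y τ|))
  obtain ⟨η, hη, hball⟩ := Metric.mem_nhds_iff.mp (Filter.inter_mem h1 h2)
  -- every element of B is ≥ τ + η
  have hgeb : ∀ b ∈ B, τ + η ≤ b := by
    intro b hb
    by_contra hlt
    push_neg at hlt
    have hbτ : τ ≤ b := csInf_le hBbdd hb
    have hmem : b ∈ Metric.ball τ η := by
      rw [Metric.mem_ball, Real.dist_eq, abs_of_nonneg (by linarith)]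
      linarith
    have := hball hmem
    obtain ⟨hbx, hby⟩ := this
    simp only [Set.mem_preimage, Set.mem_Ioi] at hbx hby
    exact hb.2 ⟨by linarith, by linarith⟩
  have := le_csInf hB hgeb
  rw [← hτ_def] at this
  linarith
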